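/- arXiv:1307.1174 — 3 statements merged into one kernel-verified Lean document; each statement's English description precedes it below -/
import Mathlib

section
/- Let {A_1,…,A_k} be a non-degenerate collection of n×m real matrices with n ≤ m < nk. Let j_1,…,j_r ∈ {1,…,k} be distinct indices and let J' ⊆ {1,…,n} with #J' = n'. Then the linear map from S to (ℝ^n)^{r−1} × ℝ^{J'} sending ξ = (ξ_1,…,ξ_k) to (ξ_{j_1},…,ξ_{j_{r−1}}, ((ξ_{j_r})_i)_{i∈J'}) is a linear isomorphism; in particular the only ξ ∈ S with ξ_{j_1} = ⋯ = ξ_{j_{r−1}} = 0 and (ξ_{j_r})_i = 0 for all i ∈ J' is ξ = 0, and dim S = n(r−1) + n' = nk − m. -/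
open MeasureTheory

/-- Non-degeneracy of a collection of `n × m` matrices: for every `J ⊆ {1,…,k}` with
`#J = k − r` and every `j ∉ J`, the `m` rows obtained by stacking the matrices `A_i`,
`i ∈ J`, together with any choice of `n − n'` distinct rows of `A_j`, are linearly
independent (i.e. the corresponding `m × m` matrix is non-singular). -/
def IsNondegenerate {n k : ℕ} {ι : Type} (r n' : ℕ)
    (A : Fin k → Matrix (Fin n) ι ℝ) : Prop :=
  ∀ J : Finset (Fin k), J.card = k - r → ∀ j : Fin k, j ∉ J →
    ∀ ρ : Fin (n - n') → Fin n, Function.Injective ρ →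
      LinearIndependent ℝ
        (Sum.elim (fun p : {x // x ∈ J} × Fin n => A p.1.1 p.2)
          (fun l : Fin (n - n') => A j (ρ l)))

/-- The subspace `S = {ξ = (ξ₁,…,ξ_k) : ∑ⱼ Aⱼᵗ ξⱼ = 0}` of the configuration space `(ℝⁿ)ᵏ`. -/
noncomputable def Ssub {n m k : ℕ} (A : Fin k → Matrix (Fin n) (Fin m) ℝ) :
    Submodule ℝ (EuclideanSpace ℝ (Fin k × Fin n)) :=
  LinearMap.ker (Matrix.toEuclideanLin
    (Matrix.of fun (l : Fin m) (p : Fin k × Fin n) => A p.1 p.2 l))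

/-- The `j`-th component `ξ_j ∈ ℝⁿ` of a point `ξ` of the configuration space `(ℝⁿ)ᵏ`. -/
noncomputable def projC {n k : ℕ} (j : Fin k) (ξ : EuclideanSpace ℝ (Fin k × Fin n)) :
    EuclideanSpace ℝ (Fin n) :=
  WithLp.toLp 2 (fun i => ξ (j, i))

/-- The coordinate map `ξ ↦ (ξ_{j₁},…,ξ_{j_{r−1}}, ((ξ_{j_r})_i)_{i ∈ J'})` on `S`. -/
noncomputable def coordMap {n m k : ℕ} (A : Fin k → Matrix (Fin n) (Fin m) ℝ)
    (r : ℕ) (hr0 : 1 ≤ r) (js : Fin r → Fin k) (J' : Finset (Fin n)) (ξ : Ssub A) :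
    (Fin (r - 1) → EuclideanSpace ℝ (Fin n)) × ({i // i ∈ J'} → ℝ) :=
  (fun l => projC (js ⟨l.1, lt_of_lt_of_le l.2 (Nat.sub_le r 1)⟩) ξ.1,
   fun i => ξ.1 (js ⟨r - 1, Nat.sub_lt hr0 Nat.one_pos⟩, i.1))

theorem statement_8
    (n m k r n' : ℕ) (hk : 3 ≤ k) (hnm : n ≤ m) (hm : m < n * k)
    (hr0 : 1 ≤ r) (hr1 : n * (r - 1) < n * k - m) (hr2 : n * k - m ≤ n * r)
    (hn'def : n' = n * k - m - n * (r - 1))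
    (A : Fin k → Matrix (Fin n) (Fin m) ℝ) (hA : IsNondegenerate r n' A)
    (js : Fin r → Fin k) (hjs : Function.Injective js)
    (J' : Finset (Fin n)) (hJ' : J'.card = n') :
    IsLinearMap ℝ (coordMap A r hr0 js J') ∧
    Function.Bijective (coordMap A r hr0 js J') ∧
    (∀ ξ : Ssub A,
        (∀ l : Fin (r - 1), ∀ i : Fin n,
            ξ.1 (js ⟨l.1, lt_of_lt_of_le l.2 (Nat.sub_le r 1)⟩, i) = 0) →
        (∀ i ∈ J', ξ.1 (js ⟨r - 1, Nat.sub_lt hr0 Nat.one_pos⟩, i) = 0) →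
        ξ = 0) ∧
    Module.finrank ℝ (Ssub A) = n * (r - 1) + n' ∧
    Module.finrank ℝ (Ssub A) = n * k - m := by
  classical
  -- arithmetic preliminaries
  have hrk : r ≤ k := by simpa using Fintype.card_le_of_injective js hjs
  have hn'n : n' ≤ n := by
    rw [← hJ']
    simpa using Finset.card_le_card (Finset.subset_univ J')
  have hnr : n * r = n * (r - 1) + n := by
    cases r with
    | zero => omega
    | succ t => simp [Nat.mul_succ]
  have hmulc : n * k = k * n := Nat.mul_comm n k
  have hmulr : n * r = r * n := Nat.mul_comm n r
  have hkrn : (k - r) * n = k * n - r * n := Nat.sub_mul k r n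
  have hmeq : (k - r) * n + (n - n') = m := by omega
  -- the matrix
  set M : Matrix (Fin m) (Fin k × Fin n) ℝ :=
    Matrix.of fun (l : Fin m) (p : Fin k × Fin n) => A p.1 p.2 l with hM
  have hSker : Ssub A = LinearMap.ker (Matrix.toEuclideanLin M) := rfl
  have hker : ∀ ξ : Ssub A, ∀ l : Fin m,
      ∑ p : Fin k × Fin n, A p.1 p.2 l * ξ.1 p = 0 := by
    intro ξ l
    have hmem : Matrix.toEuclideanLin M ξ.1 = 0 := LinearMap.mem_ker.mp ξ.2
    have h2 := congrFun (congrArg (WithLp.equiv 2 (Fin m → ℝ)) hmem) l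
    change (Matrix.mulVec M (WithLp.ofLp ξ.1)) l = (0 : Fin m → ℝ) l at h2
    simp only [Matrix.mulVec, dotProduct, hM, Matrix.of_apply,
      Pi.zero_apply] at h2
    exact h2
  -- the index sets
  set jr : Fin k := js ⟨r - 1, Nat.sub_lt hr0 Nat.one_pos⟩ with hjr
  set Jc : Finset (Fin k) := (Finset.univ.image js)ᶜ with hJcdef
  have hJc_card : Jc.card = k - r := by
    rw [hJcdef, Finset.card_compl, Finset.card_image_of_injective _ hjs]
    simp
  have hjrJc : jr ∉ Jc := by
    simp only [hJcdef, Finset.mem_compl, not_not, Finset.mem_image]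
    exact ⟨_, Finset.mem_univ _, rfl⟩
  have hJ'c_card : (J'ᶜ).card = n - n' := by
    rw [Finset.card_compl, hJ']
    simp
  set ρ : Fin (n - n') → Fin n :=
    fun l => ((J'ᶜ.equivFin).symm (Fin.cast hJ'c_card.symm l)).1 with hρdef
  have hρinj : Function.Injective ρ := by
    intro a b hab
    have h1 := (J'ᶜ.equivFin).symm.injective (Subtype.coe_injective hab)
    simpa [Fin.ext_iff] using h1
  have hρmem : ∀ l, ρ l ∉ J' := by
    intro l
    have h2 : ρ l ∈ J'ᶜ := ((J'ᶜ.equivFin).symm (Fin.cast hJ'c_card.symm l)).2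
    exact Finset.mem_compl.mp h2
  have hρsurj : ∀ i : Fin n, i ∉ J' → ∃ l, ρ l = i := by
    intro i hi
    refine ⟨Fin.cast hJ'c_card ((J'ᶜ.equivFin) ⟨i, Finset.mem_compl.mpr hi⟩), ?_⟩
    simp [hρdef, Fin.cast_cast]
  -- the linearly independent family
  have hLI := hA Jc hJc_card jr hjrJc ρ hρinj
  set Q := ({x // x ∈ Jc} × Fin n) ⊕ Fin (n - n') with hQ
  set v : Q → (Fin m → ℝ) :=
    Sum.elim (fun p : {x // x ∈ Jc} × Fin n => A p.1.1 p.2)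
      (fun l : Fin (n - n') => A jr (ρ l)) with hv
  have hQcard : Fintype.card Q = m := by
    simp [hQ, Fintype.card_sum, Fintype.card_prod, Fintype.card_coe, hJc_card]
    omega
  set e : Q → Fin k × Fin n :=
    Sum.elim (fun p => (p.1.1, p.2)) (fun l => (jr, ρ l)) with he
  have heinj : Function.Injective e := by
    rintro (⟨⟨a, ha⟩, i⟩ | a) (⟨⟨b, hb⟩, i'⟩ | b) hab <;>
      simp [he, Prod.ext_iff] at hab
    · obtain ⟨h1, h2⟩ := hab
      subst h1; subst h2; rfl
    · exact absurd (hab.1 ▸ ha) hjrJc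
    · exact absurd (hab.1.symm ▸ hb) hjrJc
    · rw [hρinj hab]
  have hvM : ∀ q : Q, v q = fun l => M l (e q) := by
    rintro (⟨⟨a, ha⟩, i⟩ | a) <;> rfl
  -- key vanishing lemma
  have key : ∀ ξ : Ssub A,
      (∀ l : Fin (r - 1), ∀ i : Fin n,
          ξ.1 (js ⟨l.1, lt_of_lt_of_le l.2 (Nat.sub_le r 1)⟩, i) = 0) →
      (∀ i ∈ J', ξ.1 (js ⟨r - 1, Nat.sub_lt hr0 Nat.one_pos⟩, i) = 0) →
      ξ = 0 := by
    intro ξ h1 h2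
    have hvanish : ∀ p : Fin k × Fin n, (∀ q : Q, e q ≠ p) → ξ.1 p = 0 := by
      rintro ⟨j, i⟩ hp
      by_cases hjJc : j ∈ Jc
      · exact absurd rfl (hp (Sum.inl ⟨⟨j, hjJc⟩, i⟩))
      · obtain ⟨t, ht⟩ : ∃ t : Fin r, js t = j := by
          simpa [hJcdef, Finset.mem_compl, Finset.mem_image] using hjJc
        by_cases htl : t.1 < r - 1
        · have h := h1 ⟨t.1, htl⟩ i
          have : (⟨t.1, lt_of_lt_of_le htl (Nat.sub_le r 1)⟩ : Fin r) = t := rfl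
          rwa [this, ht] at h
        · have htr : t = ⟨r - 1, Nat.sub_lt hr0 Nat.one_pos⟩ := by
            apply Fin.ext
            have := t.2
            simp only []
            omega
          have hjjr : j = jr := by rw [← ht, htr]
          by_cases hiJ' : i ∈ J'
          · rw [hjjr]; exact h2 i hiJ'
          · obtain ⟨l, hl⟩ := hρsurj i hiJ'
            exact absurd (by simp [he, hl, hjjr]) (hp (Sum.inr l))
    have hsum : ∑ q : Q, (fun q => ξ.1 (e q)) q • v q = 0 := by
      funext l
      have h1' : ∑ q : Q, ξ.1 (e q) * v q l
          = ∑ q : Q, (fun p : Fin k × Fin n => A p.1 p.2 l * ξ.1 p) (e q) := by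
        refine Finset.sum_congr rfl fun q _ => ?_
        rw [hvM q]
        exact mul_comm _ _
      have h2' : ∑ q : Q, (fun p : Fin k × Fin n => A p.1 p.2 l * ξ.1 p) (e q)
          = ∑ p : Fin k × Fin n, A p.1 p.2 l * ξ.1 p := by
        refine (Finset.sum_map Finset.univ ⟨e, heinj⟩
          (fun p : Fin k × Fin n => A p.1 p.2 l * ξ.1 p)).symm.trans ?_
        refine Finset.sum_subset (Finset.subset_univ _) ?_
        intro p _ hpni
        have hne : ∀ q : Q, e q ≠ p :=
          fun q hq => hpni (Finset.mem_map.mpr ⟨q, Finset.mem_univ _, hq⟩)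
        rw [hvanish p hne, mul_zero]
      calc (∑ q : Q, (fun q => ξ.1 (e q)) q • v q) l
          = ∑ q : Q, ξ.1 (e q) * v q l := by
            simp [Finset.sum_apply]
        _ = 0 := by rw [h1', h2']; exact hker ξ l
    have hall := Fintype.linearIndependent_iff.mp hLI (fun q => ξ.1 (e q)) hsum
    apply Subtype.ext
    refine PiLp.ext fun p => ?_
    have hz : (0 : Ssub A).1 p = 0 := rfl
    rw [hz]
    by_cases hq : ∃ q : Q, e q = p
    · obtain ⟨q, rfl⟩ := hq
      exact hall q
    · exact hvanish p (fun q h => hq ⟨q, h⟩)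
  -- surjectivity of the big matrix map
  have hspan : Submodule.span ℝ (Set.range v) = ⊤ := by
    refine hLI.span_eq_top_of_card_eq_finrank' ?_
    rw [hQcard, Module.finrank_pi]
    simp
  have hsurj' : Function.Surjective (Matrix.toLin' M) := by
    rw [← LinearMap.range_eq_top, ← top_le_iff, ← hspan, Submodule.span_le]
    rintro w ⟨q, rfl⟩
    refine ⟨Pi.single (e q) 1, ?_⟩
    rw [hvM q]
    funext l
    simp [Matrix.toLin'_apply, Matrix.mulVec_single]
  have hsurj : Function.Surjective (Matrix.toEuclideanLin M) := by
    intro y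
    obtain ⟨x, hx⟩ := hsurj' ((WithLp.equiv 2 (Fin m → ℝ)) y)
    refine ⟨(WithLp.equiv 2 (Fin k × Fin n → ℝ)).symm x, ?_⟩
    apply (WithLp.equiv 2 (Fin m → ℝ)).injective
    simpa using hx
  have hrank : Module.finrank ℝ (Ssub A) = n * k - m := by
    have hrn := LinearMap.finrank_range_add_finrank_ker (Matrix.toEuclideanLin M)
    rw [LinearMap.range_eq_top.mpr hsurj, finrank_top] at hrn
    rw [finrank_euclideanSpace, finrank_euclideanSpace] at hrn
    simp [Fintype.card_prod] at hrn
    rw [hSker]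
    omega
  -- linearity
  have hlin : IsLinearMap ℝ (coordMap A r hr0 js J') := by
    constructor
    · intro x y
      refine Prod.ext ?_ ?_ <;> funext <;> try funext
      all_goals simp [coordMap, projC]
      all_goals rfl
    · intro c x
      refine Prod.ext ?_ ?_ <;> funext <;> try funext
      all_goals simp [coordMap, projC]
      all_goals rfl
  set L : Ssub A →ₗ[ℝ] (Fin (r - 1) → EuclideanSpace ℝ (Fin n)) × ({i // i ∈ J'} → ℝ) :=
    IsLinearMap.mk' _ hlin with hL
  have hinjL : Function.Injective L := by
    rw [← LinearMap.ker_eq_bot, LinearMap.ker_eq_bot']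
    intro ξ hξ
    apply key ξ
    · intro l i
      have := congrArg (fun v => v.ofLp i) (congrFun (congrArg Prod.fst hξ) l)
      simpa [hL, coordMap, projC] using this
    · intro i hi
      have := congrFun (congrArg Prod.snd hξ) ⟨i, hi⟩
      simpa [hL, coordMap] using this
  have hcod : Module.finrank ℝ
      ((Fin (r - 1) → EuclideanSpace ℝ (Fin n)) × ({i // i ∈ J'} → ℝ))
      = (r - 1) * n + n' := by
    rw [Module.finrank_prod, Module.finrank_pi_fintype, Module.finrank_pi]
    simp [finrank_euclideanSpace, Fintype.card_coe, hJ', Finset.sum_const, mul_comm]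
  have hdim2 : Module.finrank ℝ (Ssub A) = n * (r - 1) + n' := by
    rw [hrank]
    have := Nat.mul_comm n (r - 1)
    omega
  have hdimeq : Module.finrank ℝ (Ssub A)
      = Module.finrank ℝ ((Fin (r - 1) → EuclideanSpace ℝ (Fin n)) × ({i // i ∈ J'} → ℝ)) := by
    rw [hdim2, hcod, Nat.mul_comm]
  have hbij : Function.Bijective L :=
    ⟨hinjL, (LinearMap.injective_iff_surjective_of_finrank_eq_finrank hdimeq).mp hinjL⟩
  exact ⟨hlin, hbij, key, hdim2, hrank⟩
end

section
/- Let t, s be positive integers, let a_1, a_2, …, a_s be distinct positive real numbers, and let 0 ≤ η_1 < η_2 < ⋯ < η_t be integers. Then the t×s real matrix A whose entry in row i and column j is a_j^{η_i} has full rank; that is, rank A = min(t, s). -/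
open Finset

/-- A sum of `n` power terms vanishing at `n` distinct (strictly increasing)
positive points has all coefficients zero. -/
lemma key_mono : ∀ (n : ℕ) (η : Fin n → ℕ), StrictMono η → ∀ (c : Fin n → ℝ) (x : Fin n → ℝ),
    StrictMono x → (∀ j, 0 < x j) → (∀ j, ∑ i, c i * x j ^ η i = 0) → c = 0 := by
  intro n
  induction n with
  | zero => intro η _ c x _ _ _; ext i; exact i.elim0
  | succ n ih =>
    intro η hη c x hx hxpos hroot
    set g : ℝ → ℝ := fun y => ∑ i, c i * y ^ ((η i : ℤ) - (η 0 : ℤ)) with hg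
    have hderiv : ∀ y : ℝ, 0 < y →
        HasDerivAt g (∑ i, c i * ((Int.cast ((η i : ℤ) - (η 0 : ℤ)) : ℝ) *
          y ^ ((η i : ℤ) - (η 0 : ℤ) - 1))) y := by
      intro y hy
      apply HasDerivAt.fun_sum
      intro i _
      exact ((hasDerivAt_zpow ((η i : ℤ) - (η 0 : ℤ)) y (Or.inl hy.ne')).const_mul (c i))
    have hgroot : ∀ j, g (x j) = 0 := by
      intro j
      have hxj := (hxpos j).ne'
      have : g (x j) = (∑ i, c i * x j ^ η i) * (x j) ^ (-(η 0 : ℤ)) := by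
        rw [Finset.sum_mul]
        refine Finset.sum_congr rfl fun i _ => ?_
        rw [mul_assoc, ← zpow_natCast (x j) (η i), ← zpow_add₀ hxj]
        ring_nf
      rw [this, hroot j, zero_mul]
    -- Rolle between consecutive roots
    have hR : ∀ j : Fin n, ∃ ξ ∈ Set.Ioo (x j.castSucc) (x j.succ), deriv g ξ = 0 := by
      intro j
      have hlt : x j.castSucc < x j.succ := hx Fin.castSucc_lt_succ
      refine exists_deriv_eq_zero hlt ?_ (by rw [hgroot, hgroot])
      intro y hy
      have hy0 : 0 < y := lt_of_lt_of_le (hxpos _) hy.1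
      exact ((hderiv y hy0).continuousAt).continuousWithinAt
    choose ξ hξmem hξ0 using hR
    have hξpos : ∀ j, 0 < ξ j := fun j => lt_trans (hxpos _) (hξmem j).1
    have hξmono : StrictMono ξ := by
      intro j k hjk
      calc ξ j < x j.succ := (hξmem j).2
        _ ≤ x k.castSucc := by
            apply hx.monotone
            rw [Fin.succ_le_castSucc_iff]
            exact Fin.castSucc_lt_castSucc_iff.mpr hjk
        _ < ξ k := (hξmem k).1
    -- the derivative as a sum of n power terms
    set c' : Fin n → ℝ := fun k => c k.succ * ((η k.succ : ℝ) - (η 0 : ℝ)) with hc'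
    set η' : Fin n → ℕ := fun k => η k.succ - η 0 - 1 with hη'
    have hηle : ∀ k : Fin n, η 0 + 1 ≤ η k.succ := fun k => hη (Fin.succ_pos k)
    have hη'mono : StrictMono η' := by
      intro k l hkl
      have h1 := hηle k
      have h2 : η k.succ < η l.succ := hη (Fin.succ_lt_succ_iff.mpr hkl)
      simp only [hη']
      omega
    have hroot' : ∀ j, ∑ k, c' k * ξ j ^ η' k = 0 := by
      intro j
      have hd := (hderiv (ξ j) (hξpos j)).deriv
      rw [hξ0 j] at hd
      rw [Fin.sum_univ_succ] at hd
      simp only [sub_self, zero_zpow, Int.cast_zero, zero_mul, mul_zero, zero_add] at hd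
      have hterm : ∀ k : Fin n, c' k * ξ j ^ η' k =
          c k.succ * ((Int.cast ((η k.succ : ℤ) - (η 0 : ℤ)) : ℝ) *
            ξ j ^ ((η k.succ : ℤ) - (η 0 : ℤ) - 1)) := by
        intro k
        have hcast : ((η' k : ℤ)) = (η k.succ : ℤ) - (η 0 : ℤ) - 1 := by
          have := hηle k
          simp only [hη']
          omega
        rw [show ξ j ^ η' k = ξ j ^ ((η' k : ℤ)) from (zpow_natCast _ _).symm, hcast, hc']
        push_cast
        ring
      calc ∑ k, c' k * ξ j ^ η' k
          = ∑ k : Fin n, c k.succ * ((Int.cast ((η k.succ : ℤ) - (η 0 : ℤ)) : ℝ) *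
            ξ j ^ ((η k.succ : ℤ) - (η 0 : ℤ) - 1)) := Finset.sum_congr rfl fun k _ => hterm k
        _ = 0 := hd.symm
    have hc'0 : c' = 0 := ih η' hη'mono c' ξ hξmono hξpos hroot'
    have hcsucc : ∀ k : Fin n, c k.succ = 0 := by
      intro k
      have h1 : c' k = 0 := by rw [hc'0]; rfl
      have h2 : (η k.succ : ℝ) - (η 0 : ℝ) ≠ 0 := by
        have := hηle k
        have : (η 0 : ℝ) < (η k.succ : ℝ) := by exact_mod_cast (by omega : η 0 < η k.succ)
        linarith
      rcases mul_eq_zero.1 h1 with h | h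
      · exact h
      · exact absurd h h2
    have hc0 : c 0 = 0 := by
      have h := hroot 0
      rw [Fin.sum_univ_succ] at h
      simp only [hcsucc, zero_mul, Finset.sum_const_zero, add_zero] at h
      have : x 0 ^ η 0 ≠ 0 := pow_ne_zero _ (hxpos 0).ne'
      exact (mul_eq_zero.1 h).resolve_right this
    ext i
    refine Fin.cases ?_ ?_ i
    · exact hc0
    · exact hcsucc

lemma key_inj (n : ℕ) (η : Fin n → ℕ) (hη : StrictMono η) (c : Fin n → ℝ) (x : Fin n → ℝ)
    (hx : Function.Injective x) (hxpos : ∀ j, 0 < x j)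
    (hroot : ∀ j, ∑ i, c i * x j ^ η i = 0) : c = 0 := by
  classical
  set S : Finset ℝ := Finset.image x Finset.univ with hS
  have hcard : S.card = n := by
    rw [hS, Finset.card_image_of_injective _ hx, Finset.card_univ, Fintype.card_fin]
  set y : Fin n → ℝ := fun k => ((S.orderIsoOfFin hcard k : S) : ℝ) with hy
  have hymono : StrictMono y := fun k l hkl => (S.orderIsoOfFin hcard).strictMono hkl
  have hmem : ∀ k, ∃ j, x j = y k := by
    intro k
    have : y k ∈ S := (S.orderIsoOfFin hcard k).2
    simpa [hS, eq_comm] using Finset.mem_image.1 this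
  refine key_mono n η hη c y hymono ?_ ?_
  · intro k; obtain ⟨j, hj⟩ := hmem k; rw [← hj]; exact hxpos j
  · intro k; obtain ⟨j, hj⟩ := hmem k; rw [← hj]; exact hroot j

lemma det_ne_zero (n : ℕ) (η : Fin n → ℕ) (hη : StrictMono η) (b : Fin n → ℝ)
    (hb : Function.Injective b) (hbpos : ∀ j, 0 < b j) :
    (Matrix.of fun (i j : Fin n) => b j ^ η i).det ≠ 0 := by
  intro hdet
  obtain ⟨v, hv, hvm⟩ := Matrix.exists_vecMul_eq_zero_iff.2 hdet
  apply hv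
  refine key_inj n η hη v b hb hbpos ?_
  intro j
  have h := congrFun hvm j
  simpa [Matrix.vecMul, dotProduct] using h

theorem statement_17
    (t s : ℕ) (ht : 1 ≤ t) (hs : 1 ≤ s)
    (a : Fin s → ℝ) (ha : Function.Injective a) (hapos : ∀ j, 0 < a j)
    (η : Fin t → ℕ) (hη : StrictMono η) :
    (Matrix.of fun (i : Fin t) (j : Fin s) => a j ^ η i).rank = min t s := by
  classical
  set A : Matrix (Fin t) (Fin s) ℝ := Matrix.of fun (i : Fin t) (j : Fin s) => a j ^ η i with hA
  rcases le_total t s with hts | hst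
  · -- rank = t
    rw [min_eq_left hts]
    refine le_antisymm ?_ ?_
    · calc A.rank ≤ Fintype.card (Fin t) := A.rank_le_card_height
        _ = t := Fintype.card_fin t
    · set B : Matrix (Fin t) (Fin t) ℝ :=
        Matrix.of fun (i j : Fin t) => a (Fin.castLE hts j) ^ η i with hB
      have hdet : B.det ≠ 0 :=
        det_ne_zero t η hη (a ∘ Fin.castLE hts)
          (ha.comp (Fin.castLE_injective hts)) (fun j => hapos _)
      have hrB : B.rank = t := by
        rw [Matrix.rank_of_isUnit B ((Matrix.isUnit_iff_isUnit_det B).2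
          (isUnit_iff_ne_zero.2 hdet)), Fintype.card_fin]
      set P : Matrix (Fin s) (Fin t) ℝ :=
        Matrix.of fun (j : Fin s) (k : Fin t) => if Fin.castLE hts k = j then (1 : ℝ) else 0
      have hBP : B = A * P := by
        ext i k
        simp only [hB, Matrix.of_apply, Matrix.mul_apply, P, hA, mul_ite, mul_one, mul_zero]
        rw [Finset.sum_ite_eq Finset.univ (Fin.castLE hts k) (fun j => a j ^ η i)]
        simp
      calc t = B.rank := hrB.symm
        _ = (A * P).rank := by rw [hBP]
        _ ≤ A.rank := Matrix.rank_mul_le_left A P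
  · -- rank = s
    rw [min_eq_right hst]
    refine le_antisymm ?_ ?_
    · calc A.rank ≤ Fintype.card (Fin s) := A.rank_le_card_width
        _ = s := Fintype.card_fin s
    · set C : Matrix (Fin s) (Fin s) ℝ :=
        Matrix.of fun (i j : Fin s) => a j ^ η (Fin.castLE hst i) with hC
      have hdet : C.det ≠ 0 :=
        det_ne_zero s (η ∘ Fin.castLE hst)
          (hη.comp (Fin.strictMono_castLE hst)) a ha hapos
      have hrC : C.rank = s := by
        rw [Matrix.rank_of_isUnit C ((Matrix.isUnit_iff_isUnit_det C).2
          (isUnit_iff_ne_zero.2 hdet)), Fintype.card_fin]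
      set Q : Matrix (Fin s) (Fin t) ℝ :=
        Matrix.of fun (i : Fin s) (i' : Fin t) => if Fin.castLE hst i = i' then (1 : ℝ) else 0
      have hQC : C = Q * A := by
        ext i j
        simp only [hC, Matrix.of_apply, Matrix.mul_apply, Q, hA, ite_mul, one_mul, zero_mul]
        rw [Finset.sum_ite_eq Finset.univ (Fin.castLE hst i) (fun i' => a j ^ η i')]
        simp
      calc s = C.rank := hrC.symm
        _ = (Q * A).rank := by rw [hQC]
        _ ≤ A.rank := Matrix.rank_mul_le_right Q A
end

section
/- Let 0 < ε < 1 and let K ≥ 1 be an integer. Then for every choice of integers v_1, …, v_K ∈ ℤ, the Lebesgue measure of the set {t ∈ [0,1] : ‖t v_ℓ‖ ≤ ε for all 1 ≤ ℓ ≤ K} is at least (1/2)·(ε/2)^K, where ‖s‖ denotes the distance from the real number s to the nearest integer. -/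
open MeasureTheory

theorem statement_19
    (ε : ℝ) (hε1 : 0 < ε) (hε2 : ε < 1) (K : ℕ) (hK : 1 ≤ K)
    (v : Fin K → ℤ) :
    ENNReal.ofReal ((1 / 2) * (ε / 2) ^ K) ≤
      volume {t : ℝ | t ∈ Set.Icc (0 : ℝ) 1 ∧
        ∀ ℓ : Fin K, |t * (v ℓ : ℝ) - (round (t * (v ℓ : ℝ)) : ℝ)| ≤ ε} := by
  set A := {t : ℝ | t ∈ Set.Icc (0 : ℝ) 1 ∧
        ∀ ℓ : Fin K, |t * (v ℓ : ℝ) - (round (t * (v ℓ : ℝ)) : ℝ)| ≤ ε} with hAdef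
  set N : ℕ := ⌈1 / ε⌉₊ with hNdef
  have hNpos : 0 < N := Nat.ceil_pos.2 (by positivity)
  have hNR : (0:ℝ) < N := by exact_mod_cast hNpos
  have hNle : (N : ℝ) ≤ 2 / ε := by
    have h1 : (1:ℝ) ≤ 1/ε := by rw [le_div_iff₀ hε1]; linarith
    have h2 : (⌈1/ε⌉₊ : ℝ) < 1/ε + 1 := Nat.ceil_lt_add_one (by positivity)
    have h3 : (2:ℝ)/ε = 1/ε + 1/ε := by ring
    rw [hNdef]
    linarith
  have hinv : 1 / (N:ℝ) ≤ ε := by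
    rw [div_le_iff₀ hNR]
    have h1 : (1:ℝ)/ε ≤ N := Nat.le_ceil _
    calc (1:ℝ) = ε * (1/ε) := by field_simp
      _ ≤ ε * N := by nlinarith
  have hhalf : ε / 2 ≤ 1 / (N:ℝ) := by
    rw [div_le_div_iff₀ (by norm_num) hNR]
    have h1 : (N:ℝ) * ε ≤ 2 := (le_div_iff₀ hε1).1 hNle
    linarith [mul_comm ε (N:ℝ)]
  -- the boxes
  set T : (Fin K → Fin N) → Set ℝ := fun c =>
    {t : ℝ | t ∈ Set.Ico (0:ℝ) 1 ∧ ∀ ℓ : Fin K,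
      Int.fract (t * (v ℓ : ℝ)) ∈ Set.Ico ((c ℓ : ℝ)/N) (((c ℓ : ℝ)+1)/N)} with hTdef
  -- covering
  have hcover : Set.Ico (0:ℝ) 1 ⊆ ⋃ c, T c := by
    intro t ht
    have hc : ∀ ℓ : Fin K, (⌊(N:ℝ) * Int.fract (t * (v ℓ : ℝ))⌋).toNat < N := by
      intro ℓ
      set x := Int.fract (t * (v ℓ : ℝ)) with hx
      have hx0 : 0 ≤ x := Int.fract_nonneg _
      have hx1 : x < 1 := Int.fract_lt_one _
      have h0 : 0 ≤ ⌊(N:ℝ) * x⌋ := Int.floor_nonneg.2 (by positivity)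
      have h1 : ⌊(N:ℝ) * x⌋ < (N:ℤ) := Int.floor_lt.2 (by push_cast; nlinarith)
      omega
    refine Set.mem_iUnion.2 ⟨fun ℓ => ⟨_, hc ℓ⟩, ht, fun ℓ => ?_⟩
    set x := Int.fract (t * (v ℓ : ℝ)) with hx
    have hx0 : 0 ≤ x := Int.fract_nonneg _
    have h0 : 0 ≤ ⌊(N:ℝ) * x⌋ := Int.floor_nonneg.2 (by positivity)
    have hfl : ((⌊(N:ℝ)*x⌋ : ℝ)) ≤ (N:ℝ)*x := Int.floor_le _
    have hfl2 : (N:ℝ)*x < (⌊(N:ℝ)*x⌋ : ℝ) + 1 := Int.lt_floor_add_one _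
    have hcast : (((⌊(N:ℝ)*x⌋).toNat : ℝ)) = ((⌊(N:ℝ)*x⌋ : ℝ)) := by
      exact_mod_cast congrArg Int.cast (Int.toNat_of_nonneg h0)
    constructor
    · rw [div_le_iff₀ hNR]
      simp only [Fin.val_mk]
      rw [hcast]; nlinarith
    · rw [lt_div_iff₀ hNR]
      simp only [Fin.val_mk]
      rw [hcast]; nlinarith
  -- measurability
  have hTm : ∀ c, MeasurableSet (T c) := by
    intro c
    have : T c = Set.Ico (0:ℝ) 1 ∩ ⋂ ℓ : Fin K,
        (fun t : ℝ => Int.fract (t * (v ℓ : ℝ))) ⁻¹' Set.Ico ((c ℓ : ℝ)/N) (((c ℓ : ℝ)+1)/N) := by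
      ext t; simp [hTdef, Set.mem_iInter]
    rw [this]
    exact measurableSet_Ico.inter (MeasurableSet.iInter fun ℓ =>
      (measurable_fract.comp (measurable_id.mul_const _)) measurableSet_Ico)
  -- pigeonhole
  have hNe : Nonempty (Fin N) := ⟨⟨0, hNpos⟩⟩
  have hsum : (∑ _c : (Fin K → Fin N), ((N:ENNReal)^K)⁻¹) ≤ ∑ c, volume (T c) := by
    have h1 : (1:ENNReal) ≤ ∑ c, volume (T c) := by
      calc (1:ENNReal) = volume (Set.Ico (0:ℝ) 1) := by simp
        _ ≤ volume (⋃ c, T c) := measure_mono hcover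
        _ ≤ ∑ c, volume (T c) := measure_iUnion_fintype_le _ _
    have h2 : (∑ _c : (Fin K → Fin N), ((N:ENNReal)^K)⁻¹) = 1 := by
      rw [Finset.sum_const, Finset.card_univ, Fintype.card_fun]
      simp only [Fintype.card_fin]
      rw [nsmul_eq_mul, Nat.cast_pow]
      exact ENNReal.mul_inv_cancel
        (pow_ne_zero _ (Nat.cast_ne_zero.2 hNpos.ne'))
        (ENNReal.pow_ne_top (ENNReal.natCast_ne_top N))
    rw [h2]; exact h1
  obtain ⟨c, -, hc⟩ := ENNReal.exists_le_of_sum_le Finset.univ_nonempty hsum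
  -- volume lower bound on the box
  have hb : ENNReal.ofReal ((ε/2)^K) ≤ volume (T c) := by
    refine le_trans ?_ hc
    have h1 : ((ε/2)^K : ℝ) ≤ (1/(N:ℝ))^K := pow_le_pow_left₀ (by positivity) hhalf K
    have h2 : ENNReal.ofReal ((1/(N:ℝ))^K) = ((N:ENNReal)^K)⁻¹ := by
      rw [one_div, ENNReal.ofReal_pow (by positivity), ENNReal.ofReal_inv_of_pos hNR,
        ENNReal.ofReal_natCast, ENNReal.inv_pow]
    rw [← h2]
    exact ENNReal.ofReal_le_ofReal h1
  -- pick a point of the box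
  have hTpos : volume (T c) ≠ 0 := by
    intro h
    rw [h] at hb
    simp only [nonpos_iff_eq_zero, ENNReal.ofReal_eq_zero] at hb
    nlinarith [pow_pos (by linarith : (0:ℝ) < ε/2) K]
  obtain ⟨a, ha⟩ := nonempty_of_measure_ne_zero hTpos
  -- difference property
  have hdiff : ∀ s t : ℝ, s ∈ T c → t ∈ T c → ∀ ℓ : Fin K,
      |(s - t) * (v ℓ : ℝ) - (round ((s - t) * (v ℓ : ℝ)) : ℝ)| ≤ ε := by
    intro s t hs ht ℓ
    set x := s * (v ℓ : ℝ) with hx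
    set y := t * (v ℓ : ℝ) with hy
    obtain ⟨hs1, hs2⟩ := (hs.2 ℓ)
    obtain ⟨ht1, ht2⟩ := (ht.2 ℓ)
    have hwidth : ((c ℓ : ℝ)+1)/N - (c ℓ : ℝ)/N = 1/N := by ring
    have hfd : |Int.fract x - Int.fract y| ≤ ε := by
      rw [abs_le]
      constructor <;> nlinarith
    have key : (s - t) * (v ℓ : ℝ) - ((⌊x⌋ - ⌊y⌋ : ℤ) : ℝ) = Int.fract x - Int.fract y := by
      rw [Int.fract, Int.fract]; push_cast; rw [hx, hy]; ring
    calc |(s - t) * (v ℓ : ℝ) - (round ((s - t) * (v ℓ : ℝ)) : ℝ)|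
        ≤ |(s - t) * (v ℓ : ℝ) - ((⌊x⌋ - ⌊y⌋ : ℤ) : ℝ)| := round_le _ _
      _ = |Int.fract x - Int.fract y| := by rw [key]
      _ ≤ ε := hfd
  -- splitting
  set S1 := T c ∩ Set.Ici a with hS1
  set S2 := T c ∩ Set.Iic a with hS2
  have hsplit : volume (T c) ≤ volume S1 + volume S2 := by
    refine le_trans (measure_mono ?_) (measure_union_le _ _)
    intro t ht
    rcases le_total a t with h | h
    · exact Or.inl ⟨ht, h⟩
    · exact Or.inr ⟨ht, h⟩
  -- images land in A
  have himg1 : (fun t => t - a) '' S1 ⊆ A := by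
    rintro _ ⟨t, ⟨htT, hta⟩, rfl⟩
    refine ⟨⟨by simpa using hta, ?_⟩, hdiff t a htT ha⟩
    have h1 : t < 1 := htT.1.2
    have h2 : 0 ≤ a := ha.1.1
    show t - a ≤ 1
    linarith
  have himg2 : (fun t => a - t) '' S2 ⊆ A := by
    rintro _ ⟨t, ⟨htT, hta⟩, rfl⟩
    refine ⟨⟨by simpa using hta, ?_⟩, hdiff a t ha htT⟩
    have h1 : a < 1 := ha.1.2
    have h2 : 0 ≤ t := htT.1.1
    show a - t ≤ 1
    linarith
  -- volume of images
  have hvol1 : volume ((fun t => t - a) '' S1) = volume S1 := by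
    have : (fun t : ℝ => t - a) '' S1 = (fun t : ℝ => t + a) ⁻¹' S1 :=
      congrFun (Set.image_eq_preimage_of_inverse (fun x => by ring) (fun x => by ring)) S1
    rw [this, measure_preimage_add_right]
  have hvol2 : volume ((fun t => a - t) '' S2) = volume S2 := by
    have : (fun t : ℝ => a - t) '' S2 = (fun t : ℝ => a - t) ⁻¹' S2 :=
      congrFun (Set.image_eq_preimage_of_inverse (fun x => by ring) (fun x => by ring)) S2
    rw [this]
    have h2 : (fun t : ℝ => a - t) ⁻¹' S2 = Neg.neg ⁻¹' ((fun t : ℝ => a + t) ⁻¹' S2) := by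
      ext x; simp [sub_eq_add_neg]
    rw [h2, Measure.measure_preimage_neg, measure_preimage_add]
  -- conclude
  have hTA : volume (T c) ≤ 2 * volume A := by
    rcases le_total (volume S2) (volume S1) with h | h
    · calc volume (T c) ≤ volume S1 + volume S2 := hsplit
        _ ≤ 2 * volume S1 := by rw [two_mul]; exact add_le_add_right h _
        _ ≤ 2 * volume A := by
            have h : volume S1 ≤ volume A := hvol1 ▸ measure_mono himg1
            exact mul_le_mul_right h 2
    · calc volume (T c) ≤ volume S1 + volume S2 := hsplit
        _ ≤ 2 * volume S2 := by rw [two_mul]; exact add_le_add_left h _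
        _ ≤ 2 * volume A := by
            have h : volume S2 ≤ volume A := hvol2 ▸ measure_mono himg2
            exact mul_le_mul_right h 2
  have hkey : 2 * ENNReal.ofReal ((1/2) * (ε/2)^K) ≤ 2 * volume A := by
    calc 2 * ENNReal.ofReal ((1/2) * (ε/2)^K)
        = ENNReal.ofReal (2 * ((1/2) * (ε/2)^K)) := by
          rw [ENNReal.ofReal_mul (by norm_num : (0:ℝ) ≤ 2), ENNReal.ofReal_ofNat]
      _ = ENNReal.ofReal ((ε/2)^K) := by congr 1; ring
      _ ≤ volume (T c) := hb
      _ ≤ 2 * volume A := hTA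
  exact (ENNReal.mul_le_mul_iff_right (by norm_num) (by norm_num)).1 hkey
end
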